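/- Define σ*(t) = 3/(4t²) + 15/(16(t−1)²) + 103/(144t) − 103/(144(t−1)) for t ∈ ℂ with t ≠ 0, 1, and define the rational map w(λ) = 1 − 27λ/(4(λ−1)³). For every λ ∈ ℂ with λ·(λ−1)·(λ−4)·(2λ+1) ≠ 0 and 4(λ−1)³ ≠ 27λ, one has 3·(20 − 33λ + 28λ² − 7λ³ + λ⁴)/(4·λ²·(4 − 5λ + λ²)²) = w'(λ)²·σ*(w(λ)) + (2·w'(λ)·w'''(λ) − 3·w''(λ)²)/w'(λ)². -/

import Mathlib

/-- The sigma invariant of the quotient Shimura curve `V₆* = V₆/⟨w₂,w₃⟩` of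
discriminant 6, in a coordinate with elliptic points of indices 2, 4, 6 at
`t = 0, 1, ∞`. -/
noncomputable def sigmaStar (t : ℂ) : ℂ :=
  3 / (4 * t ^ 2) + 15 / (16 * (t - 1) ^ 2) + 103 / (144 * t) - 103 / (144 * (t - 1))

/-- The degree-3 covering map `t = w(λ) = 1 - 27λ/(4(λ-1)³)` from the λ-line of the
family of twists No. 6 to `V₆*`. -/
noncomputable def wCover (lam : ℂ) : ℂ := 1 - 27 * lam / (4 * (lam - 1) ^ 3)

noncomputable def w1 (l : ℂ) : ℂ := 27 / 4 * (2 * l + 1) / (l - 1) ^ 4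
noncomputable def w2 (l : ℂ) : ℂ := -(81 / 2) * (l + 1) / (l - 1) ^ 5
noncomputable def w3 (l : ℂ) : ℂ := 81 * (2 * l + 3) / (l - 1) ^ 6

lemma hden (l : ℂ) (hl : l ≠ 1) : (l - 1 : ℂ) ≠ 0 := sub_ne_zero.mpr hl

lemma hasDerivAt_wCover (l : ℂ) (hl : l ≠ 1) : HasDerivAt wCover (w1 l) l := by
  have h := hden l hl
  have hd : (4 * (l - 1) ^ 3 : ℂ) ≠ 0 := by
    simp [h]
  have hnum : HasDerivAt (fun x : ℂ => 27 * x) 27 l := by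
    simpa using (hasDerivAt_id l).const_mul (27 : ℂ)
  have hdenom : HasDerivAt (fun x : ℂ => 4 * (x - 1) ^ 3) (4 * (3 * (l - 1) ^ 2)) l := by
    have h3 : HasDerivAt (fun x : ℂ => (x - 1) ^ 3) (3 * (l - 1) ^ 2) l := by
      simpa using ((hasDerivAt_id l).sub_const 1).fun_pow 3
    exact h3.const_mul 4
  have hq := hnum.div hdenom hd
  have := (hasDerivAt_const l (1 : ℂ)).sub hq
  refine this.congr_deriv ?_
  unfold w1
  field_simp
  ring

lemma hasDerivAt_w1 (l : ℂ) (hl : l ≠ 1) : HasDerivAt w1 (w2 l) l := by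
  have h := hden l hl
  have hd : ((l - 1 : ℂ) ^ 4) ≠ 0 := pow_ne_zero _ h
  have hnum : HasDerivAt (fun x : ℂ => 27 / 4 * (2 * x + 1)) (27 / 4 * 2) l := by
    simpa using (((hasDerivAt_id l).const_mul 2).add_const 1).const_mul ((27 : ℂ) / 4)
  have hdenom : HasDerivAt (fun x : ℂ => (x - 1) ^ 4) (4 * (l - 1) ^ 3) l := by
    simpa using ((hasDerivAt_id l).sub_const 1).fun_pow 4
  have := hnum.div hdenom hd
  refine this.congr_deriv ?_
  unfold w2
  field_simp
  ring

lemma hasDerivAt_w2 (l : ℂ) (hl : l ≠ 1) : HasDerivAt w2 (w3 l) l := by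
  have h := hden l hl
  have hd : ((l - 1 : ℂ) ^ 5) ≠ 0 := pow_ne_zero _ h
  have hnum : HasDerivAt (fun x : ℂ => -(81 / 2) * (x + 1)) (-(81 / 2)) l := by
    simpa using (((hasDerivAt_id l).add_const 1).const_mul (-(81 / 2) : ℂ))
  have hdenom : HasDerivAt (fun x : ℂ => (x - 1) ^ 5) (5 * (l - 1) ^ 4) l := by
    simpa using ((hasDerivAt_id l).sub_const 1).fun_pow 5
  have := hnum.div hdenom hd
  refine this.congr_deriv ?_
  unfold w3
  field_simp
  ring

lemma deriv_wCover_eq (l : ℂ) (hl : l ≠ 1) : deriv wCover l = w1 l :=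
  (hasDerivAt_wCover l hl).deriv

lemma deriv_wCover_eventually (l : ℂ) (hl : l ≠ 1) :
    deriv wCover =ᶠ[nhds l] w1 := by
  filter_upwards [IsOpen.mem_nhds (isOpen_ne : IsOpen {x : ℂ | x ≠ 1}) hl] with x hx
  exact deriv_wCover_eq x hx

lemma deriv2_wCover_eq (l : ℂ) (hl : l ≠ 1) : deriv (deriv wCover) l = w2 l := by
  rw [Filter.EventuallyEq.deriv_eq (deriv_wCover_eventually l hl)]
  exact (hasDerivAt_w1 l hl).deriv

lemma deriv2_wCover_eventually (l : ℂ) (hl : l ≠ 1) :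
    deriv (deriv wCover) =ᶠ[nhds l] w2 := by
  filter_upwards [IsOpen.mem_nhds (isOpen_ne : IsOpen {x : ℂ | x ≠ 1}) hl] with x hx
  exact deriv2_wCover_eq x hx

lemma deriv3_wCover_eq (l : ℂ) (hl : l ≠ 1) :
    deriv (deriv (deriv wCover)) l = w3 l := by
  rw [Filter.EventuallyEq.deriv_eq (deriv2_wCover_eventually l hl)]
  exact (hasDerivAt_w2 l hl).deriv

set_option maxHeartbeats 4000000 in
/-- The sigma invariant of the Picard-Fuchs equation of the family of twists No. 6
equals the pullback of `σ*` through the degree-3 map `w`, via the full cocycle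
formula including the Schwarzian derivative of `w`. -/
theorem sigma_match_no6 (l : ℂ)
    (h0 : l * (l - 1) * (l - 4) * (2 * l + 1) ≠ 0)
    (h1 : 4 * (l - 1) ^ 3 ≠ 27 * l) :
    3 * (20 - 33 * l + 28 * l ^ 2 - 7 * l ^ 3 + l ^ 4)
        / (4 * l ^ 2 * (4 - 5 * l + l ^ 2) ^ 2)
      = (deriv wCover l) ^ 2 * sigmaStar (wCover l)
        + (2 * deriv wCover l * deriv (deriv (deriv wCover)) l
            - 3 * (deriv (deriv wCover) l) ^ 2) / (deriv wCover l) ^ 2 := by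
  have hl0 : l ≠ 0 := by intro h; apply h0; rw [h]; ring
  have hl1 : l - 1 ≠ 0 := by intro h; apply h0; rw [show l = 1 from by linear_combination h]; ring
  have hl1' : l ≠ 1 := fun h => hl1 (by rw [h]; ring)
  have hl4 : l - 4 ≠ 0 := by
    intro h; apply h0; rw [show l = 4 from by linear_combination h]; ring
  have hl2 : 2 * l + 1 ≠ 0 := by
    intro h; apply h0; rw [h]; ring
  have hw : wCover l = (4 * (l - 1) ^ 3 - 27 * l) / (4 * (l - 1) ^ 3) := by
    unfold wCover; field_simp
  have hq : 4 * (l - 1) ^ 3 - 27 * l ≠ 0 := sub_ne_zero.mpr h1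
  have hwne : wCover l ≠ 0 := by
    rw [hw]; exact div_ne_zero hq (by simp [hl1])
  have hwm1 : wCover l - 1 = -(27 * l) / (4 * (l - 1) ^ 3) := by
    unfold wCover; field_simp; ring
  have hwm1ne : wCover l - 1 ≠ 0 := by
    rw [hwm1]
    exact div_ne_zero (by simp [hl0]) (by simp [hl1])
  have h45 : (4 - 5 * l + l ^ 2 : ℂ) ≠ 0 := by
    intro h; apply hl1; have : (l - 1) * (l - 4) = 0 := by linear_combination h
    rcases mul_eq_zero.mp this with h' | h'
    · exact h'
    · exact absurd h' hl4
  have hsig : sigmaStar (wCover l)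
      = 3 * (4 * (l - 1) ^ 3) ^ 2 / (4 * (4 * (l - 1) ^ 3 - 27 * l) ^ 2)
        + 15 * (4 * (l - 1) ^ 3) ^ 2 / (16 * (27 * l) ^ 2)
        + 103 * (4 * (l - 1) ^ 3) / (144 * (4 * (l - 1) ^ 3 - 27 * l))
        + 103 * (4 * (l - 1) ^ 3) / (144 * (27 * l)) := by
    have key : ∀ A : ℂ, A ≠ 0 → A = 4 * (l - 1) ^ 3 - 27 * l →
        3 / (4 * (A / (4 * (l - 1) ^ 3)) ^ 2)
          + 15 / (16 * (-(27 * l) / (4 * (l - 1) ^ 3)) ^ 2)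
          + 103 / (144 * (A / (4 * (l - 1) ^ 3)))
          - 103 / (144 * (-(27 * l) / (4 * (l - 1) ^ 3)))
        = 3 * (4 * (l - 1) ^ 3) ^ 2 / (4 * A ^ 2)
          + 15 * (4 * (l - 1) ^ 3) ^ 2 / (16 * (27 * l) ^ 2)
          + 103 * (4 * (l - 1) ^ 3) / (144 * A)
          + 103 * (4 * (l - 1) ^ 3) / (144 * (27 * l)) := by
      intro A hAne hA
      field_simp
      ring
    rw [sigmaStar, hw]
    have := key _ hq rfl
    rw [show ((4 * (l - 1) ^ 3 - 27 * l) / (4 * (l - 1) ^ 3) - 1 : ℂ)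
        = -(27 * l) / (4 * (l - 1) ^ 3) from by
      field_simp; ring]
    exact this
  rw [deriv_wCover_eq l hl1', deriv2_wCover_eq l hl1', deriv3_wCover_eq l hl1', hsig]
  simp only [w1, w2, w3]
  have hl2' : ((2 * l + 1 : ℂ)) ^ 2 ≠ 0 := pow_ne_zero _ hl2
  have hl1p : ∀ n : ℕ, ((l - 1 : ℂ)) ^ n ≠ 0 := fun n => pow_ne_zero _ hl1
  have e0 : (2 * (27 / 4 * (2 * l + 1) / (l - 1) ^ 4) * (81 * (2 * l + 3) / (l - 1) ^ 6)
        - 3 * (-(81 / 2) * (l + 1) / (l - 1) ^ 5) ^ 2)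
        / (27 / 4 * (2 * l + 1) / (l - 1) ^ 4) ^ 2
      = (-12) * (l ^ 2 + 2 * l + 3) / ((2 * l + 1) ^ 2 * (l - 1) ^ 2) := by
    have hW : (27 / 4 * (2 * l + 1) / (l - 1) ^ 4 : ℂ) ^ 2 ≠ 0 :=
      pow_ne_zero _ (div_ne_zero (mul_ne_zero (by norm_num) hl2) (hl1p 4))
    rw [div_eq_iff hW]
    field_simp
    ring
  have e1 : (27 / 4 * (2 * l + 1) / (l - 1) ^ 4) ^ 2
        * (3 * (4 * (l - 1) ^ 3) ^ 2 / (4 * (4 * (l - 1) ^ 3 - 27 * l) ^ 2))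
      = 2187 * (2 * l + 1) ^ 2 / (4 * ((l - 1) ^ 2 * (4 * (l - 1) ^ 3 - 27 * l) ^ 2)) := by
    field_simp
    ring
  have e2 : (27 / 4 * (2 * l + 1) / (l - 1) ^ 4) ^ 2
        * (15 * (4 * (l - 1) ^ 3) ^ 2 / (16 * (27 * l) ^ 2))
      = 15 * (2 * l + 1) ^ 2 / (16 * (l ^ 2 * (l - 1) ^ 2)) := by
    field_simp
  have e3 : (27 / 4 * (2 * l + 1) / (l - 1) ^ 4) ^ 2
        * (103 * (4 * (l - 1) ^ 3) / (144 * (4 * (l - 1) ^ 3 - 27 * l)))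
      = 75087 * (2 * l + 1) ^ 2 / (576 * ((l - 1) ^ 5 * (4 * (l - 1) ^ 3 - 27 * l))) := by
    field_simp
    ring
  have e4 : (27 / 4 * (2 * l + 1) / (l - 1) ^ 4) ^ 2
        * (103 * (4 * (l - 1) ^ 3) / (144 * (27 * l)))
      = 309 * (2 * l + 1) ^ 2 / (64 * (l * (l - 1) ^ 5)) := by
    field_simp
    ring
  have n1 : (4 * ((l - 1) ^ 2 * (4 * (l - 1) ^ 3 - 27 * l) ^ 2) : ℂ) ≠ 0 :=
    mul_ne_zero (by norm_num) (mul_ne_zero (hl1p 2) (pow_ne_zero _ hq))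
  have n2 : (16 * (l ^ 2 * (l - 1) ^ 2) : ℂ) ≠ 0 :=
    mul_ne_zero (by norm_num) (mul_ne_zero (pow_ne_zero _ hl0) (hl1p 2))
  have n3 : (576 * ((l - 1) ^ 5 * (4 * (l - 1) ^ 3 - 27 * l)) : ℂ) ≠ 0 :=
    mul_ne_zero (by norm_num) (mul_ne_zero (hl1p 5) hq)
  have n4 : (64 * (l * (l - 1) ^ 5) : ℂ) ≠ 0 :=
    mul_ne_zero (by norm_num) (mul_ne_zero hl0 (hl1p 5))
  have n5 : ((2 * l + 1) ^ 2 * (l - 1) ^ 2 : ℂ) ≠ 0 := mul_ne_zero hl2' (hl1p 2)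
  have nL : (4 * l ^ 2 * (4 - 5 * l + l ^ 2) ^ 2 : ℂ) ≠ 0 :=
    mul_ne_zero (mul_ne_zero (by norm_num) (pow_ne_zero _ hl0)) (pow_ne_zero _ h45)
  conv_rhs => rw [mul_add, mul_add, mul_add]
  rw [e0, e1, e2, e3, e4,
    div_add_div _ _ n1 n2, div_add_div _ _ (mul_ne_zero n1 n2) n3,
    div_add_div _ _ (mul_ne_zero (mul_ne_zero n1 n2) n3) n4,
    div_add_div _ _ (mul_ne_zero (mul_ne_zero (mul_ne_zero n1 n2) n3) n4) n5,
    div_eq_div_iff nL (mul_ne_zero (mul_ne_zero (mul_ne_zero (mul_ne_zero n1 n2) n3) n4) n5)]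
  ring
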